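/- In the three-state counterexample gambling game with J = [0,1/4], min I = 0 and max I = 1/4, write x_λ = v_λ(a,a') and y_λ = v_λ(a,b'). If λ_n → 0 is a sequence of discount factors such that x_{λ_n} and y_{λ_n} both converge to some v ∈ [0,1], then v ≤ 1/2 and y_{λ_n} − x_{λ_n} is asymptotically equivalent to 2√(λ_n)·(1−v) as n → ∞ (i.e. (y_{λ_n} − x_{λ_n})/(2√(λ_n)) → 1−v). -/

import Mathlib

open MeasureTheory Set Filter Topology

noncomputable section
namespace GG

abbrev PM (S : Type*) [MeasurableSpace S] := MeasureTheory.ProbabilityMeasure S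

variable {S : Type*} [MeasurableSpace S]

/-- Dirac probability measure. -/
def dirac (s : S) : PM S := ⟨MeasureTheory.Measure.dirac s, inferInstance⟩

/-- Integral of a function against a probability measure (the affine extension `f̃`). -/
def iPM (f : S → ℝ) (p : PM S) : ℝ := ∫ s, f s ∂(p : MeasureTheory.Measure S)

/-- `r` is the mixture `t p + (1-t) q`. -/
def IsMix (t : NNReal) (p q r : PM S) : Prop :=
  (r : MeasureTheory.Measure S)
    = (t : ENNReal) • (p : MeasureTheory.Measure S)
      + ((1 : ENNReal) - (t : ENNReal)) • (q : MeasureTheory.Measure S)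

/-- Convexity of a set of probability measures. -/
def PMConvex (A : Set (PM S)) : Prop :=
  ∀ p ∈ A, ∀ q ∈ A, ∀ t : NNReal, t ≤ 1 → ∀ r : PM S, IsMix t p q r → r ∈ A

/-- Convexity of a set of pairs of probability measures. -/
def PMConvex2 (A : Set (PM S × PM S)) : Prop :=
  ∀ a ∈ A, ∀ b ∈ A, ∀ t : NNReal, t ≤ 1 → ∀ c : PM S × PM S,
    IsMix t a.1 b.1 c.1 → IsMix t a.2 b.2 c.2 → c ∈ A

/-- Convex hull of a set of probability measures. -/
def convexHullPM (A : Set (PM S)) : Set (PM S) := ⋂₀ {T | A ⊆ T ∧ PMConvex T}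

/-- Convex hull of a set of pairs of probability measures. -/
def convexHull2 (A : Set (PM S × PM S)) : Set (PM S × PM S) := ⋂₀ {T | A ⊆ T ∧ PMConvex2 T}

/-- Kantorovich–Rubinstein distance. -/
def dKR {S : Type*} [MeasurableSpace S] [PseudoMetricSpace S] (p q : PM S) : ℝ :=
  sSup {r | ∃ f : S → ℝ, LipschitzWith 1 f ∧ r = |iPM f p - iPM f q|}

def argmaxOn {α : Type*} (f : α → ℝ) (A : Set α) : Set α := {p ∈ A | ∀ q ∈ A, f q ≤ f p}

def argminOn {α : Type*} (f : α → ℝ) (A : Set α) : Set α := {p ∈ A | ∀ q ∈ A, f p ≤ f q}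

section Topo

variable [TopologicalSpace S] [OpensMeasurableSpace S]

/-- Graph of the linear extension `Γ̃`: the closed convex hull of the graph of `Γ`. -/
def tGraph (Γ : S → Set (PM S)) : Set (PM S × PM S) :=
  closure (convexHull2 {z | ∃ x : S, z.1 = dirac x ∧ z.2 ∈ Γ x})

/-- The linear extension `Γ̃ : Δ(S) ⇉ Δ(S)`. -/
def tStep (Γ : S → Set (PM S)) (p : PM S) : Set (PM S) := {q | (p, q) ∈ tGraph Γ}

/-- Iterates `Γ̃ⁿ`, with `Γ̃⁰(p) = {p}` and `Γ̃^{n+1} = Γ̃ⁿ ∘ Γ̃`. -/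
def tIter (Γ : S → Set (PM S)) : ℕ → PM S → Set (PM S)
  | 0, p => {p}
  | n + 1, p => {r | ∃ q ∈ tStep Γ p, r ∈ tIter Γ n q}

/-- The reachable set `Γ^∞(x)`: closure of `⋃ₙ Γ̃ⁿ(δ_x)`. -/
def reach (Γ : S → Set (PM S)) (x : S) : Set (PM S) :=
  closure (⋃ n : ℕ, tIter Γ n (dirac x))

/-- There is a bounded measurable lower semicontinuous `φ` whose (expectation) argmax over
`R x` is exactly `{δ_x}`, for every `x`. -/
def AcyclicFor (R : S → Set (PM S)) : Prop :=
  ∃ φ : S → ℝ, Measurable φ ∧ (∃ C : ℝ, ∀ s, |φ s| ≤ C) ∧ LowerSemicontinuous φ ∧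
    ∀ x : S, argmaxOn (iPM φ) (R x) = {dirac x}

/-- There is a bounded measurable upper semicontinuous `ψ` whose (expectation) argmin over
`R y` is exactly `{δ_y}`, for every `y`. -/
def AcyclicForMin (R : S → Set (PM S)) : Prop :=
  ∃ ψ : S → ℝ, Measurable ψ ∧ (∃ C : ℝ, ∀ s, |ψ s| ≤ C) ∧ UpperSemicontinuous ψ ∧
    ∀ y : S, argminOn (iPM ψ) (R y) = {dirac y}

end Topo

section TwoPlayers

variable {X Y : Type*} [MeasurableSpace X] [MeasurableSpace Y]

/-- The bi-affine extension `ṽ(p,q) = ∫∫ v dp dq`. -/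
def iXY (v : X × Y → ℝ) (p : PM X) (q : PM Y) : ℝ :=
  ∫ x, ∫ y, v (x, y) ∂(q : MeasureTheory.Measure Y) ∂(p : MeasureTheory.Measure X)

/-- `v` is excessive: `v(x,y) = max_{p ∈ Γ(x)} ṽ(p,y)`. -/
def Excessive (Γ : X → Set (PM X)) (v : X × Y → ℝ) : Prop :=
  ∀ x : X, ∀ y : Y, IsGreatest ((fun p => iXY v p (dirac y)) '' Γ x) (v (x, y))

/-- `v` is depressive: `v(x,y) = min_{q ∈ Λ(y)} ṽ(x,q)`. -/
def Depressive (Λ : Y → Set (PM Y)) (v : X × Y → ℝ) : Prop :=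
  ∀ x : X, ∀ y : Y, IsLeast ((fun q => iXY v (dirac x) q) '' Λ y) (v (x, y))

/-- `v` is balanced: `v(x,y) = max_{p ∈ Γ(x)} min_{q ∈ Λ(y)} ṽ(p,q)
    = min_{q ∈ Λ(y)} max_{p ∈ Γ(x)} ṽ(p,q)`. -/
def Balanced (Γ : X → Set (PM X)) (Λ : Y → Set (PM Y)) (v : X × Y → ℝ) : Prop :=
  ∀ x : X, ∀ y : Y,
    IsGreatest {r | ∃ p ∈ Γ x, IsLeast (iXY v p '' Λ y) r} (v (x, y)) ∧
    IsLeast {r | ∃ q ∈ Λ y, IsGreatest ((fun p => iXY v p q) '' Γ x) r} (v (x, y))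

variable [TopologicalSpace X] [OpensMeasurableSpace X] [TopologicalSpace Y] [OpensMeasurableSpace Y]

/-- Property P1: for all `(x,y)` there is `p ∈ Γ^∞(x)` with `v(x,y) = ṽ(p,y) ≤ ũ(p,y)`. -/
def P1 (Γ : X → Set (PM X)) (u v : X × Y → ℝ) : Prop :=
  ∀ x : X, ∀ y : Y, ∃ p ∈ reach Γ x,
    v (x, y) = iXY v p (dirac y) ∧ iXY v p (dirac y) ≤ iXY u p (dirac y)

/-- Property P2: for all `(x,y)` there is `q ∈ Λ^∞(y)` with `v(x,y) = ṽ(x,q) ≥ ũ(x,q)`. -/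
def P2 (Λ : Y → Set (PM Y)) (u v : X × Y → ℝ) : Prop :=
  ∀ x : X, ∀ y : Y, ∃ q ∈ reach Λ y,
    v (x, y) = iXY v (dirac x) q ∧ iXY u (dirac x) q ≤ iXY v (dirac x) q

/-- `w` satisfies the Shapley fixed point equation for discount factor `lam`:
`w(x,y) = max_{p∈Γ(x)} min_{q∈Λ(y)} (λ u(x,y) + (1-λ) w̃(p,q))
        = min_{q∈Λ(y)} max_{p∈Γ(x)} (λ u(x,y) + (1-λ) w̃(p,q))`. -/
def ShapleyEq (Γ : X → Set (PM X)) (Λ : Y → Set (PM Y)) (u : X × Y → ℝ)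
    (lam : ℝ) (w : X × Y → ℝ) : Prop :=
  ∀ x : X, ∀ y : Y,
    IsGreatest {r | ∃ p ∈ Γ x,
      IsLeast ((fun q => lam * u (x, y) + (1 - lam) * iXY w p q) '' Λ y) r} (w (x, y)) ∧
    IsLeast {r | ∃ q ∈ Λ y,
      IsGreatest ((fun p => lam * u (x, y) + (1 - lam) * iXY w p q) '' Γ x) r} (w (x, y))

end TwoPlayers

/-- A standard gambling game: compact metric state spaces, continuous payoff,
continuous transition multifunctions with nonempty convex compact values,
leavable and non expansive. -/
structure StdGame (X Y : Type*) [MetricSpace X] [MeasurableSpace X] [OpensMeasurableSpace X]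
    [MetricSpace Y] [MeasurableSpace Y] [OpensMeasurableSpace Y] where
  G : X → Set (PM X)
  L : Y → Set (PM Y)
  u : X × Y → ℝ
  u_cont : Continuous u
  G_ne : ∀ x, (G x).Nonempty
  G_cvx : ∀ x, PMConvex (G x)
  G_cpt : ∀ x, IsCompact (G x)
  G_cont : ∀ ε : ℝ, 0 < ε → ∃ α : ℝ, 0 < α ∧ ∀ x x' : X, dist x x' ≤ α →
    ∀ p ∈ G x, ∃ p' ∈ G x', dKR p p' ≤ ε
  G_leav : ∀ x, dirac x ∈ G x
  G_nonexp : ∀ x x' : X, ∀ p ∈ G x, ∃ p' ∈ G x', dKR p p' ≤ dist x x'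
  L_ne : ∀ y, (L y).Nonempty
  L_cvx : ∀ y, PMConvex (L y)
  L_cpt : ∀ y, IsCompact (L y)
  L_cont : ∀ ε : ℝ, 0 < ε → ∃ α : ℝ, 0 < α ∧ ∀ y y' : Y, dist y y' ≤ α →
    ∀ q ∈ L y, ∃ q' ∈ L y', dKR q q' ≤ ε
  L_leav : ∀ y, dirac y ∈ L y
  L_nonexp : ∀ y y' : Y, ∀ q ∈ L y, ∃ q' ∈ L y', dKR q q' ≤ dist y y'

end GG

namespace GG

/-! The three-state counterexample gambling game. -/

/-- Three states a, b, c (Player 2 uses the primed copy a', b', c' of the same type). -/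
inductive St : Type
  | a | b | c
deriving DecidableEq

instance instFintypeSt : Fintype St :=
  ⟨{St.a, St.b, St.c}, fun x => by cases x <;> simp⟩

instance : TopologicalSpace St := ⊥
instance : DiscreteTopology St := ⟨rfl⟩
instance : MeasurableSpace St := ⊤
instance : BorelSpace St := ⟨(borel_eq_top_of_discrete (α := St)).symm⟩

/-- Generator: probability measures of the form
(1 - t - t^2) delta_x + t delta_y + t^2 delta_z for t in the parameter set I. -/
def gen (x y z : St) (I : Set ℝ) : Set (PM St) :=
  {p | ∃ t ∈ I, ((p {x} : NNReal) : ℝ) = 1 - t - t ^ 2 ∧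
    ((p {y} : NNReal) : ℝ) = t ∧ ((p {z} : NNReal) : ℝ) = t ^ 2}

/-- The transition multifunction of the counterexample, for the parameter set I:
Gam(c) = {delta_c}, Gam(a) = conv gen(a,b,c), Gam(b) = conv gen(b,a,c). -/
def Gam (I : Set ℝ) : St → Set (PM St)
  | St.a => convexHullPM (gen St.a St.b St.c I)
  | St.b => convexHullPM (gen St.b St.a St.c I)
  | St.c => {dirac St.c}

/-- The payoff: 0 on the diagonal and 1 off the diagonal. -/
def pay : St × St → ℝ := fun z => if z.1 = z.2 then 0 else 1

/-- The candidate limit value with parameter t: rows a, b equal t on columns a', b',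
equal 1 on column c'; row c identically 0. -/
def limitVal (t : ℝ) : St × St → ℝ := fun z =>
  match z with
  | (St.c, _) => 0
  | (_, St.c) => 1
  | _ => t

end GG

namespace GG


-- ## mass and integrals over the finite space St
def mass (p : PM St) (s : St) : ℝ := ((p {s} : NNReal) : ℝ)

lemma mass_nonneg (p : PM St) (s : St) : 0 ≤ mass p s := (p {s}).coe_nonneg

lemma mass_eq_toReal (p : PM St) (s : St) : mass p s = ((p : Measure St) {s}).toReal := rfl

lemma iPM_sum_univ (f : St → ℝ) (p : PM St) : iPM f p = ∑ s, mass p s * f s := by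
  rw [iPM, integral_fintype _]
  · refine Finset.sum_congr rfl fun s _ => ?_
    exact rfl
  · exact Integrable.of_finite

lemma iPM_eq_sum3 {x₁ x₂ x₃ : St} (hU : (Finset.univ : Finset St) = {x₁, x₂, x₃})
    (h12 : x₁ ≠ x₂) (h13 : x₁ ≠ x₃) (h23 : x₂ ≠ x₃) (f : St → ℝ) (p : PM St) :
    iPM f p = mass p x₁ * f x₁ + mass p x₂ * f x₂ + mass p x₃ * f x₃ := by
  rw [iPM_sum_univ, hU, Finset.sum_insert (by simp [h12, h13]),
    Finset.sum_insert (by simp [h23]), Finset.sum_singleton, add_assoc]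

lemma iPM_const (c : ℝ) (p : PM St) : iPM (fun _ => c) p = c := by
  rw [iPM]; simp

lemma mass_sum_univ (p : PM St) : ∑ s, mass p s = 1 := by
  have := iPM_sum_univ (fun _ => 1) p
  rw [iPM_const] at this
  simpa using this.symm

lemma iPM_le {f : St → ℝ} {M : ℝ} (h : ∀ s, f s ≤ M) (p : PM St) : iPM f p ≤ M := by
  rw [iPM_sum_univ]
  calc ∑ s, mass p s * f s ≤ ∑ s, mass p s * M :=
        Finset.sum_le_sum fun s _ => mul_le_mul_of_nonneg_left (h s) (mass_nonneg p s)
    _ = M := by rw [← Finset.sum_mul, mass_sum_univ, one_mul]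

lemma iPM_ge {f : St → ℝ} {m : ℝ} (h : ∀ s, m ≤ f s) (p : PM St) : m ≤ iPM f p := by
  have := iPM_le (f := fun s => -f s) (M := -m) (fun s => neg_le_neg (h s)) p
  rw [iPM_sum_univ] at this ⊢
  simp only [mul_neg, Finset.sum_neg_distrib] at this
  linarith

lemma iXY_def (v : St × St → ℝ) (p q : PM St) :
    iXY v p q = iPM (fun x => iPM (fun y => v (x, y)) q) p := rfl

lemma iXY_le {v : St × St → ℝ} {M : ℝ} (h : ∀ z, v z ≤ M) (p q : PM St) : iXY v p q ≤ M := by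
  rw [iXY_def]; exact iPM_le (fun x => iPM_le (fun y => h (x, y)) q) p

lemma iXY_ge {v : St × St → ℝ} {m : ℝ} (h : ∀ z, m ≤ v z) (p q : PM St) : m ≤ iXY v p q := by
  rw [iXY_def]; exact iPM_ge (fun x => iPM_ge (fun y => h (x, y)) q) p

lemma iPM_dirac (f : St → ℝ) (s : St) : iPM f (dirac s) = f s := by
  rw [iPM]; exact integral_dirac f s

lemma iXY_dirac_left (v : St × St → ℝ) (x : St) (q : PM St) :
    iXY v (dirac x) q = iPM (fun y => v (x, y)) q := by
  rw [iXY_def, iPM_dirac]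

lemma iXY_dirac_dirac (v : St × St → ℝ) (x y : St) :
    iXY v (dirac x) (dirac y) = v (x, y) := by
  rw [iXY_dirac_left, iPM_dirac]

-- ## mixtures
lemma iPM_mix {t : NNReal} (ht : t ≤ 1) {p q r : PM St} (h : IsMix t p q r) (f : St → ℝ) :
    iPM f r = t * iPM f p + (1 - (t:ℝ)) * iPM f q := by
  have h1 : IsFiniteMeasure ((t : ENNReal) • (p : Measure St)) := by
    constructor
    rw [Measure.smul_apply, smul_eq_mul]
    exact ENNReal.mul_lt_top ENNReal.coe_lt_top (measure_lt_top _ _)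
  have h2 : IsFiniteMeasure (((1:ENNReal) - (t : ENNReal)) • (q : Measure St)) := by
    constructor
    rw [Measure.smul_apply, smul_eq_mul]
    exact ENNReal.mul_lt_top (lt_of_le_of_lt (tsub_le_self) ENNReal.one_lt_top) (measure_lt_top _ _)
  rw [iPM, h, integral_add_measure Integrable.of_finite Integrable.of_finite,
    integral_smul_measure, integral_smul_measure]
  have ht1 : ((1:ENNReal) - (t:ENNReal)).toReal = 1 - (t:ℝ) := by
    rw [ENNReal.toReal_sub_of_le (by exact_mod_cast ht) ENNReal.one_ne_top]
    simp
  rw [ht1]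
  simp [iPM, smul_eq_mul]

lemma mem_convexHullPM {A : Set (PM St)} {p : PM St} (h : p ∈ A) : p ∈ convexHullPM A :=
  fun _ hT => hT.1 h

lemma convexHullPM_subset {A T : Set (PM St)} (hA : A ⊆ T) (hT : PMConvex T) :
    convexHullPM A ⊆ T := fun _ h => h T ⟨hA, hT⟩

lemma PMConvex_convexHullPM (A : Set (PM St)) : PMConvex (convexHullPM A) := by
  intro p hp q hq t ht r hr T hT
  exact hT.2 p (hp T hT) q (hq T hT) t ht r hr

lemma hull_iPM_le {A : Set (PM St)} {f : St → ℝ} {M : ℝ} (h : ∀ p ∈ A, iPM f p ≤ M) :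
    ∀ p ∈ convexHullPM A, iPM f p ≤ M := by
  intro p hp
  refine convexHullPM_subset (T := {p | iPM f p ≤ M}) h ?_ hp
  intro p1 h1 p2 h2 t ht r hr
  simp only [Set.mem_setOf_eq] at h1 h2 ⊢
  rw [iPM_mix ht hr]
  have ht' : (t:ℝ) ≤ 1 := by exact_mod_cast ht
  have ht0 : (0:ℝ) ≤ t := t.coe_nonneg
  nlinarith

lemma hull_iPM_ge {A : Set (PM St)} {f : St → ℝ} {m : ℝ} (h : ∀ p ∈ A, m ≤ iPM f p) :
    ∀ p ∈ convexHullPM A, m ≤ iPM f p := by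
  intro p hp
  have := hull_iPM_le (A := A) (f := fun s => -f s) (M := -m)
    (fun p hp => by rw [iPM_sum_univ]; simp only [mul_neg, Finset.sum_neg_distrib]
                    have := h p hp; rw [iPM_sum_univ] at this; linarith) p hp
  rw [iPM_sum_univ] at this ⊢
  simp only [mul_neg, Finset.sum_neg_distrib] at this
  linarith

-- ## genPM
def genMeas (x y z : St) (t : ℝ) : Measure St :=
  ENNReal.ofReal (1 - t - t^2) • Measure.dirac x
    + (ENNReal.ofReal t • Measure.dirac y + ENNReal.ofReal (t^2) • Measure.dirac z)

lemma genMeas_prob (x y z : St) {t : ℝ} (h0 : 0 ≤ t) (h1 : t ≤ 1/2) :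
    IsProbabilityMeasure (genMeas x y z t) := by
  constructor
  have hnn : 0 ≤ 1 - t - t^2 := by nlinarith
  simp only [genMeas, Measure.add_apply, Measure.smul_apply, smul_eq_mul,
    Measure.dirac_apply_of_mem (Set.mem_univ _), mul_one]
  rw [← ENNReal.ofReal_add (by positivity) (by positivity),
      ← ENNReal.ofReal_add hnn (by positivity)]
  norm_num

def genPM (x y z : St) (t : ℝ) (h0 : 0 ≤ t) (h1 : t ≤ 1/2) : PM St :=
  ⟨genMeas x y z t, genMeas_prob x y z h0 h1⟩

lemma dirac_singleton_ne {u v : St} (h : u ≠ v) : (Measure.dirac u) {v} = 0 := by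
  rw [Measure.dirac_apply' _ (by trivial)]
  simp [Set.indicator, h]

lemma dirac_singleton_self (u : St) : (Measure.dirac u) {u} = 1 :=
  Measure.dirac_apply_of_mem rfl

lemma mass_genPM₁ {x y z : St} (hxy : y ≠ x) (hxz : z ≠ x) {t : ℝ} (h0 : 0 ≤ t) (h1 : t ≤ 1/2) :
    mass (genPM x y z t h0 h1) x = 1 - t - t^2 := by
  rw [mass_eq_toReal]
  show ((genMeas x y z t) {x}).toReal = _
  simp only [genMeas, Measure.add_apply, Measure.smul_apply, smul_eq_mul,
    dirac_singleton_self, dirac_singleton_ne hxy, dirac_singleton_ne hxz, mul_one, mul_zero,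
    add_zero]
  rw [ENNReal.toReal_ofReal (by nlinarith)]

lemma mass_genPM₂ {x y z : St} (hxy : x ≠ y) (hzy : z ≠ y) {t : ℝ} (h0 : 0 ≤ t) (h1 : t ≤ 1/2) :
    mass (genPM x y z t h0 h1) y = t := by
  rw [mass_eq_toReal]
  show ((genMeas x y z t) {y}).toReal = _
  simp only [genMeas, Measure.add_apply, Measure.smul_apply, smul_eq_mul,
    dirac_singleton_self, dirac_singleton_ne hxy, dirac_singleton_ne hzy, mul_one, mul_zero,
    add_zero, zero_add]
  rw [ENNReal.toReal_ofReal h0]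

lemma mass_genPM₃ {x y z : St} (hxz : x ≠ z) (hyz : y ≠ z) {t : ℝ} (h0 : 0 ≤ t) (h1 : t ≤ 1/2) :
    mass (genPM x y z t h0 h1) z = t^2 := by
  rw [mass_eq_toReal]
  show ((genMeas x y z t) {z}).toReal = _
  simp only [genMeas, Measure.add_apply, Measure.smul_apply, smul_eq_mul,
    dirac_singleton_self, dirac_singleton_ne hxz, dirac_singleton_ne hyz, mul_one, mul_zero,
    add_zero, zero_add]
  rw [ENNReal.toReal_ofReal (by positivity)]

lemma genPM_mem_gen {x y z : St} (hxy : x ≠ y) (hxz : x ≠ z) (hyz : y ≠ z)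
    {I : Set ℝ} {t : ℝ} (ht : t ∈ I) (h0 : 0 ≤ t) (h1 : t ≤ 1/2) :
    genPM x y z t h0 h1 ∈ gen x y z I :=
  ⟨t, ht, mass_genPM₁ hxy.symm hxz.symm h0 h1, mass_genPM₂ hxy hyz.symm h0 h1,
   mass_genPM₃ hxz hyz h0 h1⟩


lemma isFiniteMeasure_ofReal_smul (r : ℝ) (μ : Measure St) [IsFiniteMeasure μ] :
    IsFiniteMeasure (ENNReal.ofReal r • μ) := by
  constructor
  rw [Measure.smul_apply, smul_eq_mul]
  exact ENNReal.mul_lt_top ENNReal.ofReal_lt_top (measure_lt_top _ _)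

lemma iPM_genPM (f : St → ℝ) {x y z : St} {t : ℝ} (h0 : 0 ≤ t) (h1 : t ≤ 1/2) :
    iPM f (genPM x y z t h0 h1) = (1 - t - t^2) * f x + t * f y + t^2 * f z := by
  have hnn : 0 ≤ 1 - t - t^2 := by nlinarith
  haveI := isFiniteMeasure_ofReal_smul (1 - t - t^2) (Measure.dirac x)
  haveI := isFiniteMeasure_ofReal_smul t (Measure.dirac y)
  haveI := isFiniteMeasure_ofReal_smul (t^2) (Measure.dirac z)
  rw [iPM]
  show ∫ s, f s ∂(genMeas x y z t) = _
  rw [genMeas, integral_add_measure Integrable.of_finite Integrable.of_finite,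
    integral_add_measure Integrable.of_finite Integrable.of_finite,
    integral_smul_measure, integral_smul_measure, integral_smul_measure,
    integral_dirac, integral_dirac, integral_dirac,
    ENNReal.toReal_ofReal hnn, ENNReal.toReal_ofReal h0, ENNReal.toReal_ofReal (by positivity)]
  simp [smul_eq_mul]; ring

lemma genPM_zero (x y z : St) (h0 : (0:ℝ) ≤ 0) (h1 : (0:ℝ) ≤ 1/2) :
    genPM x y z 0 h0 h1 = dirac x := by
  apply Subtype.ext
  show genMeas x y z 0 = Measure.dirac x
  simp [genMeas]

-- ## the swap map
def sw : St → St
  | St.a => St.b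
  | St.b => St.a
  | St.c => St.c

lemma sw_sw (s : St) : sw (sw s) = s := by cases s <;> rfl

lemma sw_meas : Measurable sw := measurable_of_finite sw

def smap (p : PM St) : PM St :=
  ⟨Measure.map sw (p : Measure St), Measure.isProbabilityMeasure_map sw_meas.aemeasurable⟩

lemma iPM_smap (f : St → ℝ) (p : PM St) : iPM f (smap p) = iPM (fun s => f (sw s)) p := by
  rw [iPM, iPM]
  exact integral_map sw_meas.aemeasurable (by
    exact (measurable_of_finite f).aestronglyMeasurable)

lemma mass_smap (p : PM St) (s : St) : mass (smap p) s = mass p (sw s) := by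
  rw [mass_eq_toReal, mass_eq_toReal]
  show ((Measure.map sw (p : Measure St)) {s}).toReal = _
  rw [Measure.map_apply sw_meas (by trivial)]
  congr 2
  ext u
  simp only [Set.mem_preimage, Set.mem_singleton_iff]
  constructor
  · intro h; rw [← h, sw_sw]
  · intro h; rw [h, sw_sw]

lemma smap_smap (p : PM St) : smap (smap p) = p := by
  apply Subtype.ext
  show Measure.map sw (Measure.map sw (p : Measure St)) = _
  rw [Measure.map_map sw_meas sw_meas]
  have h2 : sw ∘ sw = id := funext sw_sw
  rw [h2, Measure.map_id]
  rfl

lemma smap_dirac (s : St) : smap (dirac s) = dirac (sw s) := by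
  apply Subtype.ext
  show Measure.map sw (Measure.dirac s) = Measure.dirac (sw s)
  exact Measure.map_dirac' sw_meas s

lemma smap_mix {t : NNReal} {p q r : PM St} (h : IsMix t p q r) :
    IsMix t (smap p) (smap q) (smap r) := by
  show Measure.map sw (r : Measure St) = _
  rw [h, Measure.map_add _ _ sw_meas, Measure.map_smul, Measure.map_smul]
  rfl

lemma smap_mem_gen {x y z : St} {K : Set ℝ} {p : PM St} (hp : p ∈ gen x y z K) :
    smap p ∈ gen (sw x) (sw y) (sw z) K := by
  obtain ⟨t, ht, h1, h2, h3⟩ := hp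
  refine ⟨t, ht, ?_, ?_, ?_⟩
  · show mass (smap p) (sw x) = _
    rw [mass_smap, sw_sw]; exact h1
  · show mass (smap p) (sw y) = _
    rw [mass_smap, sw_sw]; exact h2
  · show mass (smap p) (sw z) = _
    rw [mass_smap, sw_sw]; exact h3

lemma smap_hull {A B : Set (PM St)} (hAB : ∀ p ∈ A, smap p ∈ B) (hB : PMConvex B)
    {p : PM St} (hp : p ∈ convexHullPM A) : smap p ∈ B := by
  refine convexHullPM_subset (T := {p | smap p ∈ B}) hAB ?_ hp
  intro p1 h1 p2 h2 t ht r hr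
  exact hB _ h1 _ h2 t ht _ (smap_mix hr)

lemma smap_Gam {K : Set ℝ} {s : St} {p : PM St} (hp : p ∈ Gam K s) :
    smap p ∈ Gam K (sw s) := by
  cases s with
  | a =>
    have hp' : p ∈ convexHullPM (gen St.a St.b St.c K) := hp
    show smap p ∈ convexHullPM (gen St.b St.a St.c K)
    exact smap_hull (A := gen St.a St.b St.c K)
      (fun q hq => mem_convexHullPM (smap_mem_gen hq)) (PMConvex_convexHullPM _) hp'
  | b =>
    have hp' : p ∈ convexHullPM (gen St.b St.a St.c K) := hp
    show smap p ∈ convexHullPM (gen St.a St.b St.c K)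
    exact smap_hull (A := gen St.b St.a St.c K)
      (fun q hq => mem_convexHullPM (smap_mem_gen hq)) (PMConvex_convexHullPM _) hp'
  | c =>
    have hp' : p = dirac St.c := hp
    show smap p ∈ ({dirac St.c} : Set (PM St))
    rw [hp', smap_dirac]
    rfl

lemma iXY_smap_smap (v : St × St → ℝ) (p q : PM St) :
    iXY v (smap p) (smap q) = iXY (fun z => v (sw z.1, sw z.2)) p q := by
  show iPM (fun x => iPM (fun y => v (x, y)) (smap q)) (smap p) = iPM (fun x => iPM (fun y => v (sw x, sw y)) q) p
  rw [iPM_smap]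
  congr 1
  funext x
  rw [iPM_smap]


-- ## further helper lemmas
lemma iPM_sub (f g : St → ℝ) (p : PM St) :
    iPM (fun s => f s - g s) p = iPM f p - iPM g p := by
  rw [iPM_sum_univ, iPM_sum_univ, iPM_sum_univ, ← Finset.sum_sub_distrib]
  refine Finset.sum_congr rfl fun s _ => by ring

lemma iXY_sub (v v' : St × St → ℝ) (p q : PM St) :
    iXY (fun z => v z - v' z) p q = iXY v p q - iXY v' p q := by
  rw [iXY_def, iXY_def, iXY_def]
  rw [show (fun x => iPM (fun y => v (x, y) - v' (x, y)) q)
      = fun x => iPM (fun y => v (x, y)) q - iPM (fun y => v' (x, y)) q from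
    funext fun x => iPM_sub _ _ q]
  exact iPM_sub _ _ p

lemma gen_eval {y₁ y₂ y₃ : St} (hU : (Finset.univ : Finset St) = {y₁, y₂, y₃})
    (h12 : y₁ ≠ y₂) (h13 : y₁ ≠ y₃) (h23 : y₂ ≠ y₃) {J : Set ℝ} {q : PM St}
    (hq : q ∈ gen y₁ y₂ y₃ J) (g : St → ℝ) :
    ∃ s ∈ J, iPM g q = (1 - s - s^2) * g y₁ + s * g y₂ + s^2 * g y₃ := by
  obtain ⟨s, hs, m1, m2, m3⟩ := hq
  have m1' : mass q y₁ = 1 - s - s^2 := m1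
  have m2' : mass q y₂ = s := m2
  have m3' : mass q y₃ = s^2 := m3
  exact ⟨s, hs, by rw [iPM_eq_sum3 hU h12 h13 h23, m1', m2', m3']⟩

def rowF (w : St × St → ℝ) (x₁ x₂ x₃ y₁ y₂ y₃ : St) (t s : ℝ) : ℝ :=
  (1 - t - t^2) * ((1 - s - s^2) * w (x₁,y₁) + s * w (x₁,y₂) + s^2 * w (x₁,y₃))
  + t * ((1 - s - s^2) * w (x₂,y₁) + s * w (x₂,y₂) + s^2 * w (x₂,y₃))
  + t^2 * ((1 - s - s^2) * w (x₃,y₁) + s * w (x₃,y₂) + s^2 * w (x₃,y₃))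

-- ## extraction lemma: upper bound from the minmax side, hull row
lemma hullRowUB {I J : Set ℝ} (hIc : IsCompact I) (hIne : I.Nonempty)
    (hIsub : I ⊆ Set.Icc 0 (1/2)) (hJsub : J ⊆ Set.Icc 0 (1/2))
    {x₁ x₂ x₃ y₁ y₂ y₃ : St}
    (hUx : (Finset.univ : Finset St) = {x₁, x₂, x₃})
    (h12 : x₁ ≠ x₂) (h13 : x₁ ≠ x₃) (h23 : x₂ ≠ x₃)
    (hy12 : y₁ ≠ y₂) (hy13 : y₁ ≠ y₃) (hy23 : y₂ ≠ y₃)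
    {lam u r0 : ℝ} (hlam1 : lam ≤ 1) {w : St × St → ℝ}
    (hL : IsLeast {r | ∃ q ∈ convexHullPM (gen y₁ y₂ y₃ J),
      IsGreatest ((fun p => lam * u + (1 - lam) * iXY w p q) ''
        convexHullPM (gen x₁ x₂ x₃ I)) r} r0)
    {s : ℝ} (hs : s ∈ J) :
    ∃ t ∈ I, r0 ≤ lam * u + (1 - lam) * rowF w x₁ x₂ x₃ y₁ y₂ y₃ t s := by
  obtain ⟨hs0, hs2⟩ := hJsub hs
  set q0 : PM St := genPM y₁ y₂ y₃ s hs0 hs2 with hq0def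
  have hq0 : q0 ∈ convexHullPM (gen y₁ y₂ y₃ J) :=
    mem_convexHullPM (genPM_mem_gen hy12 hy13 hy23 hs hs0 hs2)
  set f : St → ℝ := fun x => (1-s-s^2) * w (x,y₁) + s * w (x,y₂) + s^2 * w (x,y₃) with hfdef
  have key : ∀ p : PM St, iXY w p q0 = iPM f p := by
    intro p
    rw [iXY_def]
    congr 1
    funext x
    rw [hq0def, iPM_genPM]
  set ℓ : ℝ → ℝ := fun t => (1-t-t^2) * f x₁ + t * f x₂ + t^2 * f x₃ with hldef
  have hcont : ContinuousOn ℓ I := (by fun_prop : Continuous ℓ).continuousOn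
  obtain ⟨t, htI, hmax⟩ := hIc.exists_isMaxOn hIne hcont
  obtain ⟨ht0, ht2⟩ := hIsub htI
  set p0 : PM St := genPM x₁ x₂ x₃ t ht0 ht2 with hp0def
  have hp0 : p0 ∈ convexHullPM (gen x₁ x₂ x₃ I) :=
    mem_convexHullPM (genPM_mem_gen h12 h13 h23 htI ht0 ht2)
  have hval : iPM f p0 = ℓ t := by rw [hp0def, iPM_genPM]
  have hub : ∀ p ∈ convexHullPM (gen x₁ x₂ x₃ I), iPM f p ≤ ℓ t := by
    refine hull_iPM_le ?_
    intro p hp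
    obtain ⟨t', ht', hev⟩ := gen_eval hUx h12 h13 h23 hp f
    rw [hev]
    exact hmax ht'
  have hGr : IsGreatest ((fun p => lam * u + (1 - lam) * iXY w p q0) ''
      convexHullPM (gen x₁ x₂ x₃ I)) (lam * u + (1 - lam) * ℓ t) := by
    constructor
    · exact ⟨p0, hp0, by show lam * u + (1 - lam) * iXY w p0 q0 = _; rw [key, hval]⟩
    · rintro r ⟨p, hp, rfl⟩
      have := hub p hp
      show lam * u + (1 - lam) * iXY w p q0 ≤ _
      rw [key]
      have h1lam : (0:ℝ) ≤ 1 - lam := by linarith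
      nlinarith
  have hle := hL.2 ⟨q0, hq0, hGr⟩
  refine ⟨t, htI, ?_⟩
  have : ℓ t = rowF w x₁ x₂ x₃ y₁ y₂ y₃ t s := rfl
  rw [← this]
  exact hle

-- ## extraction lemma: upper bound, singleton row (for state c)
lemma diracRowUB {J : Set ℝ} (hJsub : J ⊆ Set.Icc 0 (1/2))
    {x₁ y₁ y₂ y₃ : St} (hy12 : y₁ ≠ y₂) (hy13 : y₁ ≠ y₃) (hy23 : y₂ ≠ y₃)
    {lam u r0 : ℝ} (hlam1 : lam ≤ 1) {w : St × St → ℝ}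
    (hL : IsLeast {r | ∃ q ∈ convexHullPM (gen y₁ y₂ y₃ J),
      IsGreatest ((fun p => lam * u + (1 - lam) * iXY w p q) ''
        ({dirac x₁} : Set (PM St))) r} r0)
    {s : ℝ} (hs : s ∈ J) :
    r0 ≤ lam * u + (1 - lam) *
      ((1-s-s^2) * w (x₁,y₁) + s * w (x₁,y₂) + s^2 * w (x₁,y₃)) := by
  obtain ⟨hs0, hs2⟩ := hJsub hs
  set q0 : PM St := genPM y₁ y₂ y₃ s hs0 hs2 with hq0def
  have hq0 : q0 ∈ convexHullPM (gen y₁ y₂ y₃ J) :=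
    mem_convexHullPM (genPM_mem_gen hy12 hy13 hy23 hs hs0 hs2)
  have hval : iXY w (dirac x₁) q0 =
      (1-s-s^2) * w (x₁,y₁) + s * w (x₁,y₂) + s^2 * w (x₁,y₃) := by
    rw [iXY_dirac_left, hq0def, iPM_genPM]
  refine hL.2 ⟨q0, hq0, ?_⟩
  constructor
  · exact ⟨dirac x₁, rfl, by show lam * u + (1 - lam) * iXY w (dirac x₁) q0 = _; rw [hval]⟩
  · rintro r ⟨p, hp, rfl⟩
    have hp' : p = dirac x₁ := hp
    show lam * u + (1 - lam) * iXY w p q0 ≤ _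
    rw [hp', hval]

-- ## extraction lemma: lower bound from the maxmin side, dirac row point
lemma diracRowLB {J : Set ℝ} (hJc : IsCompact J) (hJne : J.Nonempty)
    (hJsub : J ⊆ Set.Icc 0 (1/2))
    {y₁ y₂ y₃ : St} (hUy : (Finset.univ : Finset St) = {y₁, y₂, y₃})
    (hy12 : y₁ ≠ y₂) (hy13 : y₁ ≠ y₃) (hy23 : y₂ ≠ y₃)
    {x₁ : St} {Γset : Set (PM St)} (hdir : dirac x₁ ∈ Γset)
    {lam u r0 : ℝ} (hlam1 : lam ≤ 1) {w : St × St → ℝ}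
    (hG : IsGreatest {r | ∃ p ∈ Γset,
      IsLeast ((fun q => lam * u + (1 - lam) * iXY w p q) ''
        convexHullPM (gen y₁ y₂ y₃ J)) r} r0) :
    ∃ s ∈ J, lam * u + (1 - lam) *
      ((1-s-s^2) * w (x₁,y₁) + s * w (x₁,y₂) + s^2 * w (x₁,y₃)) ≤ r0 := by
  set g : St → ℝ := fun y => w (x₁, y) with hgdef
  set ℓ : ℝ → ℝ := fun s => (1-s-s^2) * g y₁ + s * g y₂ + s^2 * g y₃ with hldef
  have hcont : ContinuousOn ℓ J := (by fun_prop : Continuous ℓ).continuousOn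
  obtain ⟨s, hsJ, hmin⟩ := hJc.exists_isMinOn hJne hcont
  obtain ⟨hs0, hs2⟩ := hJsub hsJ
  set q0 : PM St := genPM y₁ y₂ y₃ s hs0 hs2 with hq0def
  have hq0 : q0 ∈ convexHullPM (gen y₁ y₂ y₃ J) :=
    mem_convexHullPM (genPM_mem_gen hy12 hy13 hy23 hsJ hs0 hs2)
  have hval : iXY w (dirac x₁) q0 = ℓ s := by
    rw [iXY_dirac_left, hq0def, iPM_genPM]
  have hlb : ∀ q ∈ convexHullPM (gen y₁ y₂ y₃ J), ℓ s ≤ iPM g q := by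
    refine hull_iPM_ge ?_
    intro q hq
    obtain ⟨s', hs', hev⟩ := gen_eval hUy hy12 hy13 hy23 hq g
    rw [hev]
    exact hmin hs'
  have hLst : IsLeast ((fun q => lam * u + (1 - lam) * iXY w (dirac x₁) q) ''
      convexHullPM (gen y₁ y₂ y₃ J)) (lam * u + (1 - lam) * ℓ s) := by
    constructor
    · exact ⟨q0, hq0, by show lam * u + (1 - lam) * iXY w (dirac x₁) q0 = _; rw [hval]⟩
    · rintro r ⟨q, hq, rfl⟩
      have := hlb q hq
      show lam * u + (1 - lam) * ℓ s ≤ lam * u + (1 - lam) * iXY w (dirac x₁) q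
      rw [iXY_dirac_left]
      have h1lam : (0:ℝ) ≤ 1 - lam := by linarith
      nlinarith
  exact ⟨s, hsJ, hG.2 ⟨dirac x₁, hdir, hLst⟩⟩

lemma dirac_mem_Gam_a {I : Set ℝ} (h0 : (0:ℝ) ∈ I) : dirac St.a ∈ Gam I St.a := by
  show dirac St.a ∈ convexHullPM (gen St.a St.b St.c I)
  rw [← genPM_zero St.a St.b St.c le_rfl (by norm_num)]
  exact mem_convexHullPM (genPM_mem_gen (by decide) (by decide) (by decide) h0 le_rfl (by norm_num))

lemma pay_nonneg (z : St × St) : 0 ≤ pay z := by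
  unfold pay; split <;> norm_num

lemma pay_le_one (z : St × St) : pay z ≤ 1 := by
  unfold pay; split <;> norm_num










-- ## symmetry step
lemma sym_step {I : Set ℝ} {lam : ℝ} (hlam1 : lam ≤ 1) {w : St × St → ℝ}
    (hsh : ShapleyEq (Gam I) (Gam (Set.Icc 0 (1/4))) pay lam w)
    {D : ℝ} (hD : ∀ z : St × St, w z - w (sw z.1, sw z.2) ≤ D)
    (x₁ y₁ : St) (hpay : pay (x₁, y₁) = pay (sw x₁, sw y₁)) :
    w (x₁, y₁) - w (sw x₁, sw y₁) ≤ (1 - lam) * D := by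
  obtain ⟨phat, hphat, hleast⟩ := (hsh x₁ y₁).1.1
  obtain ⟨qhat, hqhat, hgr⟩ := (hsh (sw x₁) (sw y₁)).2.1
  set q0 : PM St := smap qhat with hq0def
  have hq0 : q0 ∈ Gam (Set.Icc 0 (1/4)) y₁ := by
    have := smap_Gam hqhat
    rwa [sw_sw] at this
  have step1 : w (x₁, y₁) ≤ lam * pay (x₁, y₁) + (1 - lam) * iXY w phat q0 :=
    hleast.2 ⟨q0, hq0, rfl⟩
  have step2 : lam * pay (sw x₁, sw y₁) + (1 - lam) * iXY w (smap phat) qhat ≤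
      w (sw x₁, sw y₁) := hgr.2 ⟨smap phat, smap_Gam hphat, rfl⟩
  have hqq : qhat = smap q0 := by rw [hq0def, smap_smap]
  have key : iXY w (smap phat) qhat = iXY (fun z => w (sw z.1, sw z.2)) phat q0 := by
    rw [hqq, iXY_smap_smap]
  have diff : iXY w phat q0 - iXY (fun z => w (sw z.1, sw z.2)) phat q0 ≤ D := by
    rw [← iXY_sub]
    exact iXY_le hD phat q0
  have h1lam : (0:ℝ) ≤ 1 - lam := by linarith
  nlinarith [step1, step2, key, diff, hpay]


lemma dirac_mem_Gam_b {I : Set ℝ} (h0 : (0:ℝ) ∈ I) : dirac St.b ∈ Gam I St.b := by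
  show dirac St.b ∈ convexHullPM (gen St.b St.a St.c I)
  rw [← genPM_zero St.b St.a St.c le_rfl (by norm_num)]
  exact mem_convexHullPM (genPM_mem_gen (by decide) (by decide) (by decide) h0 le_rfl (by norm_num))

def Gfun (x y z t s : ℝ) : ℝ :=
  (1-t-t^2) * ((1-s-s^2)*y + s*x + s^2) + t * ((1-s-s^2)*x + s*y + s^2) + t^2 * (1-s^2) * z

lemma core {I : Set ℝ} (hIc : IsCompact I) (hIsub : I ⊆ Set.Icc 0 (1/2))
    (hImin : IsLeast I 0) (hImax : IsGreatest I (1/4))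
    {lam : ℝ} (hlam : lam ∈ Set.Ioc (0:ℝ) 1) {w : St × St → ℝ}
    (hsh : ShapleyEq (Gam I) (Gam (Set.Icc 0 (1/4))) pay lam w) :
    (0 ≤ w (St.a, St.a) ∧ w (St.a, St.a) ≤ 1) ∧
    (0 ≤ w (St.a, St.b) ∧ w (St.a, St.b) ≤ 1) ∧
    (0 ≤ w (St.c, St.a) ∧ w (St.c, St.a) ≤ 16 * lam) ∧
    (∃ s ∈ Set.Icc (0:ℝ) (1/4), lam * (1 - w (St.a, St.b)) ≤
      (1 - lam) * (s * (w (St.a, St.b) - w (St.a, St.a)) - s^2 * (1 - w (St.a, St.b)))) ∧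
    (∀ s ∈ Set.Icc (0:ℝ) (1/4), ∃ t ∈ Set.Icc (0:ℝ) (1/4),
      w (St.a, St.b) ≤ lam + (1 - lam) *
        Gfun (w (St.a, St.a)) (w (St.a, St.b)) (w (St.c, St.a)) t s) ∧
    (∃ t ∈ Set.Icc (0:ℝ) (1/4),
      w (St.a, St.a) ≤ (1 - lam) *
        ((1-t-t^2) * w (St.a, St.a) + t * w (St.a, St.b) + t^2 * w (St.c, St.a))) := by
  obtain ⟨hl0, hl1⟩ := hlam
  have hIne : I.Nonempty := ⟨0, hImin.1⟩
  have hJc : IsCompact (Set.Icc (0:ℝ) (1/4)) := isCompact_Icc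
  have hJne : (Set.Icc (0:ℝ) (1/4)).Nonempty := ⟨0, by norm_num⟩
  have hJsub : Set.Icc (0:ℝ) (1/4) ⊆ Set.Icc 0 (1/2) := Set.Icc_subset_Icc le_rfl (by norm_num)
  have hIsub4 : I ⊆ Set.Icc (0:ℝ) (1/4) := fun t ht => ⟨(hIsub ht).1, hImax.2 ht⟩
  -- global upper bound
  have hub1 : ∀ z : St × St, w z ≤ 1 := by
    obtain ⟨z₀, -, hz₀⟩ := Finset.exists_max_image Finset.univ w ⟨(St.a, St.a), Finset.mem_univ _⟩
    obtain ⟨x₀, y₀⟩ := z₀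
    obtain ⟨q, hq, hgr⟩ := (hsh x₀ y₀).2.1
    obtain ⟨p, hp, heq⟩ := hgr.1
    have heq' : lam * pay (x₀, y₀) + (1 - lam) * iXY w p q = w (x₀, y₀) := heq
    have hiXY : iXY w p q ≤ w (x₀, y₀) :=
      iXY_le (fun z => hz₀ z (Finset.mem_univ _)) p q
    have hpay := pay_le_one (x₀, y₀)
    have e1 : (1 - lam) * iXY w p q ≤ (1 - lam) * w (x₀, y₀) :=
      mul_le_mul_of_nonneg_left hiXY (by linarith)
    have e2 : lam * pay (x₀, y₀) ≤ lam * 1 := mul_le_mul_of_nonneg_left hpay (le_of_lt hl0)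
    have hmax1 : w (x₀, y₀) ≤ 1 := by nlinarith [heq']
    intro z
    exact le_trans (hz₀ z (Finset.mem_univ _)) hmax1
  have hlb0 : ∀ z : St × St, 0 ≤ w z := by
    obtain ⟨z₀, -, hz₀⟩ := Finset.exists_min_image Finset.univ w ⟨(St.a, St.a), Finset.mem_univ _⟩
    obtain ⟨x₀, y₀⟩ := z₀
    obtain ⟨p, hp, hleast⟩ := (hsh x₀ y₀).1.1
    obtain ⟨q, hq, heq⟩ := hleast.1
    have heq' : lam * pay (x₀, y₀) + (1 - lam) * iXY w p q = w (x₀, y₀) := heq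
    have hiXY : w (x₀, y₀) ≤ iXY w p q :=
      iXY_ge (fun z => hz₀ z (Finset.mem_univ _)) p q
    have hpay := pay_nonneg (x₀, y₀)
    have e1 : (1 - lam) * w (x₀, y₀) ≤ (1 - lam) * iXY w p q :=
      mul_le_mul_of_nonneg_left hiXY (by linarith)
    have e2 : lam * 0 ≤ lam * pay (x₀, y₀) := mul_le_mul_of_nonneg_left hpay (le_of_lt hl0)
    have hmin0 : 0 ≤ w (x₀, y₀) := by nlinarith [heq']
    intro z
    exact le_trans hmin0 (hz₀ z (Finset.mem_univ _))
  -- pinned cells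
  have hcc : w (St.c, St.c) = 0 := by
    obtain ⟨p, hp, hleast⟩ := (hsh St.c St.c).1.1
    have hp' : p = dirac St.c := hp
    obtain ⟨q, hq, heq⟩ := hleast.1
    have hq' : q = dirac St.c := hq
    have heq' : lam * pay (St.c, St.c) + (1 - lam) * iXY w p q = w (St.c, St.c) := heq
    rw [hp', hq', iXY_dirac_dirac] at heq'
    have hpayc : pay (St.c, St.c) = 0 := by simp [pay]
    rw [hpayc] at heq'
    nlinarith [heq']
  have hac : w (St.a, St.c) = 1 := by
    have hG := (hsh St.a St.c).1
    have hLst : IsLeast ((fun q => lam * pay (St.a, St.c) + (1 - lam) * iXY w (dirac St.a) q)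
        '' (Gam (Set.Icc 0 (1/4)) St.c))
        (lam * pay (St.a, St.c) + (1 - lam) * iXY w (dirac St.a) (dirac St.c)) := by
      constructor
      · exact ⟨dirac St.c, rfl, rfl⟩
      · rintro r ⟨q, hq, rfl⟩
        have hq' : q = dirac St.c := hq
        rw [hq']
    have hle := hG.2 ⟨dirac St.a, dirac_mem_Gam_a hImin.1, hLst⟩
    rw [iXY_dirac_dirac] at hle
    have hpayac : pay (St.a, St.c) = 1 := by simp [pay]
    rw [hpayac] at hle
    have := hub1 (St.a, St.c)
    nlinarith [hle]
  have hbc : w (St.b, St.c) = 1 := by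
    have hG := (hsh St.b St.c).1
    have hLst : IsLeast ((fun q => lam * pay (St.b, St.c) + (1 - lam) * iXY w (dirac St.b) q)
        '' (Gam (Set.Icc 0 (1/4)) St.c))
        (lam * pay (St.b, St.c) + (1 - lam) * iXY w (dirac St.b) (dirac St.c)) := by
      constructor
      · exact ⟨dirac St.c, rfl, rfl⟩
      · rintro r ⟨q, hq, rfl⟩
        have hq' : q = dirac St.c := hq
        rw [hq']
    have hle := hG.2 ⟨dirac St.b, dirac_mem_Gam_b hImin.1, hLst⟩
    rw [iXY_dirac_dirac] at hle
    have hpaybc : pay (St.b, St.c) = 1 := by simp [pay]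
    rw [hpaybc] at hle
    have := hub1 (St.b, St.c)
    nlinarith [hle]
  -- symmetry
  set D := max (max |w (St.a,St.a) - w (St.b,St.b)| |w (St.a,St.b) - w (St.b,St.a)|)
    |w (St.c,St.a) - w (St.c,St.b)| with hDdef
  have d1 : |w (St.a,St.a) - w (St.b,St.b)| ≤ D := le_trans (le_max_left _ _) (le_max_left _ _)
  have d2 : |w (St.a,St.b) - w (St.b,St.a)| ≤ D := le_trans (le_max_right _ _) (le_max_left _ _)
  have d3 : |w (St.c,St.a) - w (St.c,St.b)| ≤ D := le_max_right _ _
  have hDnn : 0 ≤ D := le_trans (abs_nonneg _) d3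
  have hD : ∀ z : St × St, w z - w (sw z.1, sw z.2) ≤ D := by
    have la := le_abs_self (w (St.a,St.a) - w (St.b,St.b))
    have la' := neg_abs_le (w (St.a,St.a) - w (St.b,St.b))
    have lb := le_abs_self (w (St.a,St.b) - w (St.b,St.a))
    have lb' := neg_abs_le (w (St.a,St.b) - w (St.b,St.a))
    have lc := le_abs_self (w (St.c,St.a) - w (St.c,St.b))
    have lc' := neg_abs_le (w (St.c,St.a) - w (St.c,St.b))
    rintro ⟨zx, zy⟩
    cases zx <;> cases zy
    · show w (St.a,St.a) - w (St.b,St.b) ≤ D; linarith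
    · show w (St.a,St.b) - w (St.b,St.a) ≤ D; linarith
    · show w (St.a,St.c) - w (St.b,St.c) ≤ D; rw [hac, hbc]; linarith
    · show w (St.b,St.a) - w (St.a,St.b) ≤ D; linarith
    · show w (St.b,St.b) - w (St.a,St.a) ≤ D; linarith
    · show w (St.b,St.c) - w (St.a,St.c) ≤ D; rw [hac, hbc]; linarith
    · show w (St.c,St.a) - w (St.c,St.b) ≤ D; linarith
    · show w (St.c,St.b) - w (St.c,St.a) ≤ D; linarith
    · show w (St.c,St.c) - w (St.c,St.c) ≤ D; linarith
  have s1 : w (St.a,St.a) - w (St.b,St.b) ≤ (1-lam)*D :=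
    sym_step hl1 hsh hD St.a St.a (by simp [pay, sw])
  have s2 : w (St.b,St.b) - w (St.a,St.a) ≤ (1-lam)*D :=
    sym_step hl1 hsh hD St.b St.b (by simp [pay, sw])
  have s3 : w (St.a,St.b) - w (St.b,St.a) ≤ (1-lam)*D :=
    sym_step hl1 hsh hD St.a St.b (by simp [pay, sw])
  have s4 : w (St.b,St.a) - w (St.a,St.b) ≤ (1-lam)*D :=
    sym_step hl1 hsh hD St.b St.a (by simp [pay, sw])
  have s5 : w (St.c,St.a) - w (St.c,St.b) ≤ (1-lam)*D :=
    sym_step hl1 hsh hD St.c St.a (by simp [pay, sw])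
  have s6 : w (St.c,St.b) - w (St.c,St.a) ≤ (1-lam)*D :=
    sym_step hl1 hsh hD St.c St.b (by simp [pay, sw])
  have hDle : D ≤ (1-lam)*D :=
    max_le (max_le (abs_sub_le_iff.mpr ⟨s1, s2⟩) (abs_sub_le_iff.mpr ⟨s3, s4⟩))
      (abs_sub_le_iff.mpr ⟨s5, s6⟩)
  have hD0 : D = 0 := by nlinarith
  have hsym1 : w (St.b,St.b) = w (St.a,St.a) := by
    have : |w (St.a,St.a) - w (St.b,St.b)| = 0 := le_antisymm (hD0 ▸ d1) (abs_nonneg _)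
    have := abs_eq_zero.mp this
    linarith
  have hsym2 : w (St.b,St.a) = w (St.a,St.b) := by
    have : |w (St.a,St.b) - w (St.b,St.a)| = 0 := le_antisymm (hD0 ▸ d2) (abs_nonneg _)
    have := abs_eq_zero.mp this
    linarith
  have hsym3 : w (St.c,St.b) = w (St.c,St.a) := by
    have : |w (St.c,St.a) - w (St.c,St.b)| = 0 := le_antisymm (hD0 ▸ d3) (abs_nonneg _)
    have := abs_eq_zero.mp this
    linarith
  -- z bound
  have hz16 : w (St.c, St.a) ≤ 16 * lam := by
    have hz := diracRowUB hJsub (by decide) (by decide) (by decide) hl1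
      ((hsh St.c St.a).2) (show (1/4 : ℝ) ∈ Set.Icc (0:ℝ) (1/4) by norm_num)
    rw [hsym3, hcc] at hz
    have hpayca : pay (St.c, St.a) = 1 := by simp [pay]
    rw [hpayca] at hz
    have h0 := hlb0 (St.c, St.a)
    nlinarith [hz]
  -- O2
  have hO2 : ∃ s ∈ Set.Icc (0:ℝ) (1/4), lam * (1 - w (St.a, St.b)) ≤
      (1 - lam) * (s * (w (St.a, St.b) - w (St.a, St.a)) - s^2 * (1 - w (St.a, St.b))) := by
    obtain ⟨s, hs, hstep⟩ := diracRowLB hJc hJne hJsub (by decide) (by decide) (by decide)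
      (by decide) (dirac_mem_Gam_a hImin.1) hl1 ((hsh St.a St.b).1)
    refine ⟨s, hs, ?_⟩
    have hpayab : pay (St.a, St.b) = 1 := by simp [pay]
    rw [hpayab, hac] at hstep
    nlinarith [hstep]
  -- O3
  have hO3 : ∀ s ∈ Set.Icc (0:ℝ) (1/4), ∃ t ∈ Set.Icc (0:ℝ) (1/4),
      w (St.a, St.b) ≤ lam + (1 - lam) *
        Gfun (w (St.a, St.a)) (w (St.a, St.b)) (w (St.c, St.a)) t s := by
    intro s hs
    obtain ⟨t, htI, hstep⟩ := hullRowUB hIc hIne hIsub hJsub (by decide) (by decide) (by decide)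
      (by decide) (by decide) (by decide) (by decide) hl1 ((hsh St.a St.b).2) hs
    refine ⟨t, hIsub4 htI, ?_⟩
    have hrw : rowF w St.a St.b St.c St.b St.a St.c t s =
        Gfun (w (St.a, St.a)) (w (St.a, St.b)) (w (St.c, St.a)) t s := by
      unfold rowF Gfun
      rw [hsym1, hsym2, hsym3, hac, hbc, hcc]
      ring
    have hpayab : pay (St.a, St.b) = 1 := by simp [pay]
    rw [hpayab, hrw] at hstep
    linarith [hstep]
  -- O4
  have hO4 : ∃ t ∈ Set.Icc (0:ℝ) (1/4),
      w (St.a, St.a) ≤ (1 - lam) *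
        ((1-t-t^2) * w (St.a, St.a) + t * w (St.a, St.b) + t^2 * w (St.c, St.a)) := by
    obtain ⟨t, htI, hstep⟩ := hullRowUB hIc hIne hIsub hJsub (by decide) (by decide) (by decide)
      (by decide) (by decide) (by decide) (by decide) hl1 ((hsh St.a St.a).2)
      (show (0:ℝ) ∈ Set.Icc (0:ℝ) (1/4) by norm_num)
    refine ⟨t, hIsub4 htI, ?_⟩
    have hrw : rowF w St.a St.b St.c St.a St.b St.c t 0 =
        (1-t-t^2) * w (St.a, St.a) + t * w (St.a, St.b) + t^2 * w (St.c, St.a) := by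
      unfold rowF
      rw [hsym2]
      ring
    have hpayaa : pay (St.a, St.a) = 0 := by simp [pay]
    rw [hpayaa, hrw] at hstep
    linarith [hstep]
  exact ⟨⟨hlb0 _, hub1 _⟩, ⟨hlb0 _, hub1 _⟩, ⟨hlb0 _, hz16⟩, hO2, hO3, hO4⟩


-- ## real analysis helpers
lemma step_dnn {lam x y : ℝ} (hl0 : 0 < lam) (hl1 : lam ≤ 1) (hx1 : x ≤ 1) (hy1 : y ≤ 1)
    (o2 : ∃ s ∈ Set.Icc (0:ℝ) (1/4), lam * (1 - y) ≤ (1 - lam) * (s * (y - x) - s^2 * (1 - y))) :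
    0 ≤ y - x := by
  obtain ⟨s, ⟨hs0, hs4⟩, h⟩ := o2
  by_contra hdneg
  push_neg at hdneg
  have h1 : s * (y - x) ≤ 0 := mul_nonpos_of_nonneg_of_nonpos hs0 (by linarith)
  have h2 : (0:ℝ) ≤ s^2 * (1 - y) := mul_nonneg (sq_nonneg s) (by linarith)
  have h3 : (1 - lam) * (s * (y - x) - s^2 * (1 - y)) ≤ 0 :=
    mul_nonpos_of_nonneg_of_nonpos (by linarith) (by linarith)
  have h4 : lam * (1 - y) ≤ 0 := le_trans h h3
  have h5 : 1 - y ≤ 0 := by nlinarith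
  linarith

lemma step_P2 {lam x y : ℝ} (hl1 : lam ≤ 1) (hy1 : y ≤ 1) (hd : 0 ≤ y - x)
    (o2 : ∃ s ∈ Set.Icc (0:ℝ) (1/4), lam * (1 - y) ≤ (1 - lam) * (s * (y - x) - s^2 * (1 - y))) :
    4 * lam * (1-y)^2 ≤ (1 - lam) * (y-x)^2 := by
  obtain ⟨s, ⟨hs0, hs4⟩, h⟩ := o2
  have key : 4*(1-y)*(s*(y-x) - s^2*(1-y)) ≤ (y-x)^2 := by
    nlinarith [sq_nonneg ((y-x) - 2*s*(1-y))]
  have h4 : 4*(1-y) * (lam * (1-y)) ≤ 4*(1-y) * ((1-lam) * (s*(y-x) - s^2*(1-y))) :=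
    mul_le_mul_of_nonneg_left h (by linarith)
  have h5 : (1-lam) * (4*(1-y)*(s*(y-x) - s^2*(1-y))) ≤ (1-lam) * (y-x)^2 :=
    mul_le_mul_of_nonneg_left key (by linarith)
  nlinarith [h4, h5]

lemma step_O4 {lam x y z : ℝ} (hl1 : lam ≤ 1) (hxz : 0 ≤ x - z)
    (o4 : ∃ t ∈ Set.Icc (0:ℝ) (1/4),
      x ≤ (1 - lam) * ((1-t-t^2) * x + t * y + t^2 * z)) :
    4 * lam * x * (x - z) ≤ (1 - lam) * (y-x)^2 := by
  obtain ⟨t, ⟨ht0, ht4⟩, h⟩ := o4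
  have h1 : lam * x ≤ (1 - lam) * (t*(y-x) - t^2*(x-z)) := by nlinarith [h]
  have key : 4*(x-z)*(t*(y-x) - t^2*(x-z)) ≤ (y-x)^2 := by
    nlinarith [sq_nonneg ((y-x) - 2*t*(x-z))]
  have h4 : 4*(x-z) * (lam * x) ≤ 4*(x-z) * ((1-lam) * (t*(y-x) - t^2*(x-z))) :=
    mul_le_mul_of_nonneg_left h1 (by linarith)
  have h5 : (1-lam) * (4*(x-z)*(t*(y-x) - t^2*(x-z))) ≤ (1-lam) * (y-x)^2 :=
    mul_le_mul_of_nonneg_left key (by linarith)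
  nlinarith [h4, h5]

lemma step_G {x y z t s : ℝ} (hx0 : 0 ≤ x) (hy0 : 0 ≤ y) (hy1 : y ≤ 1) (hz0 : 0 ≤ z)
    (hd : 0 ≤ y - x) (clean : z ≤ 11/16 * y + 7/4 * (y - x))
    (hs0 : 0 ≤ s) (hs4 : s ≤ 1/4) (ht0 : 0 ≤ t) (ht4 : t ≤ 1/4) :
    Gfun x y z t s ≤ (1-s-s^2)*y + s*x + s^2 := by
  have e0 : Gfun x y z t s = ((1-s-s^2)*y + s*x + s^2)
      + t * (-(1-2*s-s^2)*(y-x)) + t^2 * ((1-s^2)*z - ((1-s-s^2)*y + s*x + s^2)) := by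
    unfold Gfun; ring
  have c1 : (7:ℝ)/16 ≤ 1-2*s-s^2 := by nlinarith
  have e2 : t * (-(1-2*s-s^2)*(y-x)) ≤ -(7/16)*t*(y-x) := by nlinarith [mul_nonneg ht0 hd]
  have e3 : (1-s^2)*z - ((1-s-s^2)*y + s*x + s^2) ≤ z - 11/16*y := by
    have h1 : (1-s^2)*z ≤ z := by nlinarith
    have h2 : 11/16*y ≤ (1-s-s^2)*y :=
      mul_le_mul_of_nonneg_right (by nlinarith : (11:ℝ)/16 ≤ 1-s-s^2) hy0
    nlinarith [mul_nonneg hs0 hx0, sq_nonneg s]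
  have e4 : t^2 * ((1-s^2)*z - ((1-s-s^2)*y + s*x + s^2)) ≤ t^2 * (7/4*(y-x)) := by
    have h1 : (1-s^2)*z - ((1-s-s^2)*y + s*x + s^2) ≤ 7/4*(y-x) := by linarith
    exact mul_le_mul_of_nonneg_left h1 (sq_nonneg t)
  have e5 : t^2 * (7/4*(y-x)) ≤ (7/16)*t*(y-x) := by nlinarith [mul_nonneg ht0 hd]
  linarith [e0.le, e0.ge, e2, e4, e5]

set_option maxHeartbeats 1000000 in
lemma main_pern {lam x y z : ℝ} (hl0 : 0 < lam) (hl100 : lam ≤ 1/100)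
    (hx0 : 0 ≤ x) (hx1 : x ≤ 1) (hy0 : 0 ≤ y) (hy1 : y ≤ 1) (hz0 : 0 ≤ z) (hz16 : z ≤ 16*lam)
    (o2 : ∃ s ∈ Set.Icc (0:ℝ) (1/4), lam * (1 - y) ≤ (1 - lam) * (s * (y - x) - s^2 * (1 - y)))
    (o3 : ∀ s ∈ Set.Icc (0:ℝ) (1/4), ∃ t ∈ Set.Icc (0:ℝ) (1/4),
      y ≤ lam + (1 - lam) * Gfun x y z t s)
    (o4 : ∃ t ∈ Set.Icc (0:ℝ) (1/4),
      x ≤ (1 - lam) * ((1-t-t^2) * x + t * y + t^2 * z))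
    (clean : z ≤ 11/16 * y + 7/4 * (y - x)) :
    (1 - lam) * (y-x)^2 = 4 * lam * (1-y)^2 := by
  have hl1 : lam ≤ 1 := by linarith
  have hd : 0 ≤ y - x := step_dnn hl0 hl1 hx1 hy1 o2
  have hP2 : 4 * lam * (1-y)^2 ≤ (1 - lam) * (y-x)^2 := step_P2 hl1 hy1 hd o2
  have hylt : y < 1 := by
    by_contra hge
    push_neg at hge
    have hy1' : y = 1 := le_antisymm hy1 hge
    obtain ⟨t, ⟨ht0, ht4⟩, h3⟩ := o3 (1/4) (by norm_num)
    have hG : Gfun x y z t (1/4) ≤ 1 - (y-x)/4 + z/16 := by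
      rw [hy1']
      unfold Gfun
      have k1 : 0 ≤ t*(1-x) := mul_nonneg ht0 (by linarith)
      have k2 : 0 ≤ t^2*(3+x) := mul_nonneg (sq_nonneg t) (by linarith)
      have k3 : 0 ≤ z*(1-15*t^2) := mul_nonneg hz0 (by nlinarith)
      nlinarith [k1, k2, k3]
    have k2 : (1-lam)*((y-x)/4 - z/16) ≤ 0 := by
      nlinarith [h3, mul_le_mul_of_nonneg_left hG (show (0:ℝ) ≤ 1-lam by linarith)]
    have k3 : (y-x)/4 - z/16 ≤ 0 := by
      by_contra hk
      push_neg at hk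
      nlinarith [mul_pos (show (0:ℝ) < 1-lam by linarith) hk, k2]
    have hd4 : y - x ≤ 4*lam := by linarith [hz16]
    have hxz : 0 ≤ x - z := by nlinarith
    have hO4q : 4 * lam * x * (x - z) ≤ (1 - lam) * (y-x)^2 := step_O4 hl1 hxz o4
    have hx_lb : 1 - 4*lam ≤ x := by linarith
    have hxz_lb : 1 - 20*lam ≤ x - z := by linarith
    have hprod : (1 - 4*lam)*(1 - 20*lam) ≤ x*(x-z) :=
      mul_le_mul hx_lb hxz_lb (by linarith) (by linarith)
    have hdd : (y-x)^2 ≤ (4*lam)^2 := by nlinarith [hd, hd4]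
    have hchain : 4*lam*((1 - 4*lam)*(1 - 20*lam)) ≤ 16*lam^2 := by
      have k1 : 4*lam*((1 - 4*lam)*(1 - 20*lam)) ≤ 4*lam*(x*(x-z)) :=
        mul_le_mul_of_nonneg_left hprod (by linarith)
      nlinarith [k1, hO4q, hdd, mul_nonneg (le_of_lt hl0) (sq_nonneg (y-x))]
    have hpos : 0 < 4*(1 - 4*lam)*(1 - 20*lam) - 16*lam := by nlinarith
    nlinarith [mul_pos hl0 hpos]
  have hc0 : 0 < 1 - y := by linarith
  have hcne : (1:ℝ) - y ≠ 0 := ne_of_gt hc0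
  by_cases hcase : (y-x) / (2*(1-y)) ≤ 1/4
  · set s := (y-x)/(2*(1-y)) with hsdef
    have hs0 : 0 ≤ s := div_nonneg hd (by linarith)
    obtain ⟨t, ⟨ht0, ht4⟩, h3⟩ := o3 s ⟨hs0, hcase⟩
    have hGA : Gfun x y z t s ≤ (1-s-s^2)*y + s*x + s^2 :=
      step_G hx0 hy0 hy1 hz0 hd clean hs0 hcase ht0 ht4
    have h5 : y ≤ lam + (1-lam)*((1-s-s^2)*y + s*x + s^2) := by
      have h1l : (0:ℝ) ≤ 1 - lam := by linarith
      nlinarith [h3, mul_le_mul_of_nonneg_left hGA h1l]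
    have h6 : (1-lam)*(s*(y-x) - s^2*(1-y)) ≤ lam*(1-y) := by nlinarith [h5]
    have e : 4*(1-y)*(s*(y-x) - s^2*(1-y)) = (y-x)^2 := by
      rw [hsdef]; field_simp; ring
    have h8 : (1-lam)*(y-x)^2 ≤ 4*lam*(1-y)^2 := by
      have h6' : 4*(1-y)*((1-lam)*(s*(y-x) - s^2*(1-y))) ≤ 4*(1-y)*(lam*(1-y)) :=
        mul_le_mul_of_nonneg_left h6 (by linarith)
      calc (1-lam)*(y-x)^2 = 4*(1-y)*((1-lam)*(s*(y-x) - s^2*(1-y))) := by rw [← e]; ring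
        _ ≤ 4*(1-y)*(lam*(1-y)) := h6'
        _ = 4*lam*(1-y)^2 := by ring
    exact le_antisymm h8 hP2
  · exfalso
    push_neg at hcase
    have hdgt : (1-y)/2 < y - x := by
      have := (lt_div_iff₀ (by linarith : (0:ℝ) < 2*(1-y))).mp hcase
      linarith
    obtain ⟨t, ⟨ht0, ht4⟩, h3⟩ := o3 (1/4) (by norm_num)
    have hGA : Gfun x y z t (1/4) ≤ (1-(1/4)-(1/4:ℝ)^2)*y + (1/4)*x + (1/4:ℝ)^2 :=
      step_G hx0 hy0 hy1 hz0 hd clean (by norm_num) (by norm_num) ht0 ht4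
    have h5 : y ≤ lam + (1-lam)*((1-(1/4)-(1/4:ℝ)^2)*y + (1/4)*x + (1/4:ℝ)^2) := by
      have h1l : (0:ℝ) ≤ 1 - lam := by linarith
      nlinarith [h3, mul_le_mul_of_nonneg_left hGA h1l]
    have h6 : (1-lam)*((y-x)/4 - (1-y)/16) ≤ lam*(1-y) := by nlinarith [h5]
    nlinarith [h6, mul_nonneg (show (0:ℝ) ≤ 1 - lam by linarith)
      (show (0:ℝ) ≤ (y-x) - (1-y)/2 by linarith),
      mul_le_mul_of_nonneg_left hl100 (le_of_lt hc0), hc0, hl0]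


/-- with J = [0,1/4], min I = 0 and max I = 1/4, if along a vanishing
sequence of discount factors both x_lam = v_lam(a,a') and y_lam = v_lam(a,b') converge to
some v in [0,1], then v <= 1/2 and y_lam - x_lam is asymptotically 2 sqrt(lam) (1-v). -/
theorem statement13
    (I : Set ℝ) (hIc : IsCompact I) (hIsub : I ⊆ Set.Icc 0 (1 / 2))
    (hImin : IsLeast I 0) (hImax : IsGreatest I (1 / 4))
    (lam : ℕ → ℝ) (hlam : ∀ n, lam n ∈ Set.Ioc (0 : ℝ) 1)
    (hlam0 : Filter.Tendsto lam Filter.atTop (nhds 0))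
    (w : ℕ → St × St → ℝ)
    (hsh : ∀ n, ShapleyEq (Gam I) (Gam (Set.Icc 0 (1 / 4))) pay (lam n) (w n))
    (v : ℝ) (hv : v ∈ Set.Icc (0 : ℝ) 1)
    (hx : Filter.Tendsto (fun n => w n (St.a, St.a)) Filter.atTop (nhds v))
    (hy : Filter.Tendsto (fun n => w n (St.a, St.b)) Filter.atTop (nhds v)) :
    v ≤ 1 / 2 ∧
    Filter.Tendsto
      (fun n => (w n (St.a, St.b) - w n (St.a, St.a)) / (2 * Real.sqrt (lam n)))
      Filter.atTop (nhds (1 - v)) := by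
  have hcore := fun n => core hIc hIsub hImin hImax (hlam n) (hsh n)
  have hx0 : ∀ n, 0 ≤ w n (St.a, St.a) := fun n => (hcore n).1.1
  have hx1 : ∀ n, w n (St.a, St.a) ≤ 1 := fun n => (hcore n).1.2
  have hy0b : ∀ n, 0 ≤ w n (St.a, St.b) := fun n => (hcore n).2.1.1
  have hy1 : ∀ n, w n (St.a, St.b) ≤ 1 := fun n => (hcore n).2.1.2
  have hz0 : ∀ n, 0 ≤ w n (St.c, St.a) := fun n => (hcore n).2.2.1.1
  have hz16 : ∀ n, w n (St.c, St.a) ≤ 16 * lam n := fun n => (hcore n).2.2.1.2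
  have o2 := fun n => (hcore n).2.2.2.1
  have o3 := fun n => (hcore n).2.2.2.2.1
  have o4 := fun n => (hcore n).2.2.2.2.2
  have hzten : Filter.Tendsto (fun n => w n (St.c, St.a)) Filter.atTop (nhds 0) := by
    refine squeeze_zero hz0 hz16 ?_
    have := hlam0.const_mul (16:ℝ)
    simpa using this
  have hd0 : ∀ n, 0 ≤ w n (St.a, St.b) - w n (St.a, St.a) :=
    fun n => step_dnn (hlam n).1 (hlam n).2 (hx1 n) (hy1 n) (o2 n)
  have hclean : ∀ᶠ n in Filter.atTop, w n (St.c, St.a) ≤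
      11/16 * w n (St.a, St.b) + 7/4 * (w n (St.a, St.b) - w n (St.a, St.a)) := by
    rcases eq_or_lt_of_le hv.1 with hv0 | hv0
    · have hyev : ∀ᶠ n in Filter.atTop, w n (St.a, St.b) < 1/2 :=
        hy.eventually (gt_mem_nhds (show v < 1/2 by rw [← hv0]; norm_num))
      have hlev : ∀ᶠ n in Filter.atTop, lam n < 49/4096 :=
        hlam0.eventually (gt_mem_nhds (by norm_num))
      filter_upwards [hyev, hlev] with n h1 h2
      have hP2 := step_P2 (hlam n).2 (hy1 n) (hd0 n) (o2 n)
      have hl0 := (hlam n).1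
      have h4y : 1 ≤ 4*(1 - w n (St.a, St.b))^2 := by nlinarith
      have hdsq : lam n ≤ (w n (St.a, St.b) - w n (St.a, St.a))^2 := by
        nlinarith [hP2, mul_le_mul_of_nonneg_left h4y hl0.le,
          mul_nonneg hl0.le (sq_nonneg (w n (St.a, St.b) - w n (St.a, St.a)))]
      have h74 : 16 * lam n ≤ 7/4 * (w n (St.a, St.b) - w n (St.a, St.a)) := by
        by_contra hk
        push_neg at hk
        have hdlt : w n (St.a, St.b) - w n (St.a, St.a) < 64/7 * lam n := by linarith
        have hsq : (w n (St.a, St.b) - w n (St.a, St.a))^2 ≤ (64/7 * lam n)^2 := by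
          nlinarith [hd0 n, hdlt]
        nlinarith [hdsq, hsq, h2, hl0]
      linarith [hz16 n, h74, hy0b n]
    · have hyev : ∀ᶠ n in Filter.atTop, v/2 < w n (St.a, St.b) :=
        hy.eventually (lt_mem_nhds (by linarith))
      have hlev : ∀ᶠ n in Filter.atTop, lam n < 11*v/512 :=
        hlam0.eventually (gt_mem_nhds (by positivity))
      filter_upwards [hyev, hlev] with n h1 h2
      have : 16 * lam n ≤ 11/16 * w n (St.a, St.b) := by nlinarith
      linarith [hz16 n, hd0 n]
  have hlsmall : ∀ᶠ n in Filter.atTop, lam n ≤ 1/100 :=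
    (hlam0.eventually (gt_mem_nhds (by norm_num : (0:ℝ) < 1/100))).mono fun n h => le_of_lt h
  have hEq : ∀ᶠ n in Filter.atTop,
      (1 - lam n) * (w n (St.a, St.b) - w n (St.a, St.a))^2
        = 4 * lam n * (1 - w n (St.a, St.b))^2 := by
    filter_upwards [hclean, hlsmall] with n h1 h2
    exact main_pern (hlam n).1 h2 (hx0 n) (hx1 n) (hy0b n) (hy1 n) (hz0 n) (hz16 n)
      (o2 n) (o3 n) (o4 n) h1
  have hnum : Filter.Tendsto (fun n => 1 - w n (St.a, St.b)) Filter.atTop (nhds (1 - v)) :=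
    tendsto_const_nhds.sub hy
  have hRatio : ∀ᶠ n in Filter.atTop,
      (w n (St.a, St.b) - w n (St.a, St.a)) / (2 * Real.sqrt (lam n))
        = (1 - w n (St.a, St.b)) / Real.sqrt (1 - lam n) := by
    filter_upwards [hEq, hlsmall] with n heq hsm
    have hl0 := (hlam n).1
    have h1l : (0:ℝ) < 1 - lam n := by linarith
    have hsl : 0 < Real.sqrt (lam n) := Real.sqrt_pos.mpr hl0
    have hsl1 : 0 < Real.sqrt (1 - lam n) := Real.sqrt_pos.mpr h1l
    have hdn := hd0 n
    have hyn : 0 ≤ 1 - w n (St.a, St.b) := by linarith [hy1 n]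
    have key : (w n (St.a, St.b) - w n (St.a, St.a)) * Real.sqrt (1 - lam n)
        = 2 * Real.sqrt (lam n) * (1 - w n (St.a, St.b)) := by
      have e1 : Real.sqrt ((1 - lam n) * (w n (St.a, St.b) - w n (St.a, St.a))^2)
          = Real.sqrt (4 * lam n * (1 - w n (St.a, St.b))^2) := by rw [heq]
      rw [Real.sqrt_mul h1l.le, Real.sqrt_sq hdn] at e1
      rw [show 4 * lam n * (1 - w n (St.a, St.b))^2
          = (2 * Real.sqrt (lam n) * (1 - w n (St.a, St.b)))^2 by
        rw [mul_pow, mul_pow, Real.sq_sqrt hl0.le]; ring] at e1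
      rw [Real.sqrt_sq (by positivity)] at e1
      linear_combination e1
    have h2s : (0:ℝ) < 2 * Real.sqrt (lam n) := by linarith
    rw [div_eq_div_iff (ne_of_gt h2s) (ne_of_gt hsl1)]
    linear_combination key
  have hden : Filter.Tendsto (fun n => Real.sqrt (1 - lam n)) Filter.atTop (nhds 1) := by
    have h1 : Filter.Tendsto (fun n => 1 - lam n) Filter.atTop (nhds 1) := by
      simpa using tendsto_const_nhds.sub hlam0
    have h2 := (Real.continuous_sqrt.tendsto 1).comp h1
    simpa [Function.comp_def] using h2
  have hconv : Filter.Tendsto (fun n => (1 - w n (St.a, St.b)) / Real.sqrt (1 - lam n))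
      Filter.atTop (nhds (1 - v)) := by
    have := hnum.div hden one_ne_zero
    simpa [Pi.div_def] using this
  have htend : Filter.Tendsto
      (fun n => (w n (St.a, St.b) - w n (St.a, St.a)) / (2 * Real.sqrt (lam n)))
      Filter.atTop (nhds (1 - v)) :=
    hconv.congr' (hRatio.mono fun n h => h.symm)
  refine ⟨?_, htend⟩
  by_contra hv2
  push_neg at hv2
  have hxev : ∀ᶠ n in Filter.atTop, 1/2 < w n (St.a, St.a) := hx.eventually (lt_mem_nhds hv2)
  have hzev : ∀ᶠ n in Filter.atTop, w n (St.c, St.a) < 1/4 :=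
    hzten.eventually (gt_mem_nhds (by norm_num))
  have hkey : ∀ᶠ n in Filter.atTop,
      w n (St.a, St.a) * (w n (St.a, St.a) - w n (St.c, St.a))
        ≤ (1 - w n (St.a, St.b))^2 := by
    filter_upwards [hxev, hzev, hEq] with n h1 h2 heq
    have hxz : 0 ≤ w n (St.a, St.a) - w n (St.c, St.a) := by linarith
    have hO4q := step_O4 (hlam n).2 hxz (o4 n)
    have hl0 := (hlam n).1
    by_contra hk
    push_neg at hk
    nlinarith [hO4q, heq, mul_pos hl0 (sub_pos.mpr hk)]
  have hA : Filter.Tendsto (fun n => w n (St.a, St.a) * (w n (St.a, St.a) - w n (St.c, St.a)))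
      Filter.atTop (nhds (v * (v - 0))) := hx.mul (hx.sub hzten)
  have hB : Filter.Tendsto (fun n => (1 - w n (St.a, St.b))^2)
      Filter.atTop (nhds ((1 - v)^2)) := hnum.pow 2
  have hfin := le_of_tendsto_of_tendsto hA hB hkey
  nlinarith [hfin, hv2]


end GG
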